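/- (Filtering limitation with local phase angle measurement — achievability inside the interval.) Let M > 0, 0 < X₁ < X₂, XΣ = X₁ + X₂, r₁ = 1/(M·X₂), r₂ = 1/(M·X₁), and let ω > 0 satisfy r₁ < ω² < r₂. Then there exists a complex number c such that, with M₁ = c·(X₂/XΣ)·((iω)² + r₁)/(iω)³, M₂ = −c·(X₁/XΣ)·((iω)² + r₂)/(iω)³, P₁ = 1 − M₁ and P₂ = 1 − M₂, one has |P₁| < 1 and |P₂| < 1. (For example, a suitable purely imaginary c = iβ with β > 0 small makes both M₁ and M₂ real and in (0, 2).) -/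

import Mathlib

private lemma key1 (Xs ω β a X r : ℝ) (hXs : Xs ≠ 0) (hω : ω ≠ 0)
    (ha : a = X / Xs * (ω ^ 2 - r) / ω ^ 3) :
    1 - ((β : ℂ) * Complex.I) * ((X : ℂ) / (Xs : ℂ)) *
        ((Complex.I * ω) ^ 2 + (r : ℂ)) / (Complex.I * ω) ^ 3
      = ((1 - β * a : ℝ) : ℂ) := by
  have hXs' : (Xs : ℂ) ≠ 0 := by exact_mod_cast hXs
  have hω' : (ω : ℂ) ≠ 0 := by exact_mod_cast hω
  have hI3 : Complex.I ^ 3 = -Complex.I := by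
    simp [pow_succ, Complex.I_sq]
  subst ha
  push_cast
  field_simp
  ring_nf
  rw [Complex.I_sq]
  ring

private lemma key2 (Xs ω β b X r : ℝ) (hXs : Xs ≠ 0) (hω : ω ≠ 0)
    (hb : b = X / Xs * (r - ω ^ 2) / ω ^ 3) :
    1 - -(((β : ℂ) * Complex.I) * ((X : ℂ) / (Xs : ℂ)) *
        ((Complex.I * ω) ^ 2 + (r : ℂ)) / (Complex.I * ω) ^ 3)
      = ((1 - β * b : ℝ) : ℂ) := by
  have hXs' : (Xs : ℂ) ≠ 0 := by exact_mod_cast hXs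
  have hω' : (ω : ℂ) ≠ 0 := by exact_mod_cast hω
  have hI3 : Complex.I ^ 3 = -Complex.I := by
    simp [pow_succ, Complex.I_sq]
  subst hb
  push_cast
  field_simp
  ring_nf
  rw [Complex.I_sq]
  ring

private lemma abs_estimate (t : ℝ) (h0 : 0 < t) (h1 : t ≤ 1) :
    ‖((1 - t : ℝ) : ℂ)‖ < 1 := by
  rw [Complex.norm_real, Real.norm_eq_abs, abs_lt]
  constructor <;> nlinarith

/-- Filtering limitation with local phase angle measurement (achievability inside
the interval): if `r₁ < ω² < r₂` at a frequency `ω > 0`, then there exists a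
filter value `c = F(iω)` such that both filtering sensitivities
`P₁ = 1 − M₁`, `P₂ = 1 − M₂` satisfy `|Pᵢ| < 1`, where
`M₁ = c·(X₂/XΣ)·((iω)² + r₁)/(iω)³` and `M₂ = −c·(X₁/XΣ)·((iω)² + r₂)/(iω)³`.
Here `Xs = XΣ = X₁ + X₂`, `r₁ = 1/(M·X₂)`, `r₂ = 1/(M·X₁)`. -/
theorem local_phase_filtering_achievability
    (M X₁ X₂ Xs r₁ r₂ : ℝ) (hM : 0 < M) (hX₁ : 0 < X₁) (hX₁₂ : X₁ < X₂)
    (hXs : Xs = X₁ + X₂) (hr₁ : r₁ = 1 / (M * X₂)) (hr₂ : r₂ = 1 / (M * X₁))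
    (ω : ℝ) (hω : 0 < ω) (hlo : r₁ < ω ^ 2) (hhi : ω ^ 2 < r₂) :
    ∃ c : ℂ,
      ‖(1 - c * ((X₂ : ℂ) / (Xs : ℂ)) *
        ((Complex.I * ω) ^ 2 + (r₁ : ℂ)) / (Complex.I * ω) ^ 3)‖ < 1 ∧
      ‖(1 - -(c * ((X₁ : ℂ) / (Xs : ℂ)) *
        ((Complex.I * ω) ^ 2 + (r₂ : ℂ)) / (Complex.I * ω) ^ 3))‖ < 1 := by
  have hXs0 : 0 < Xs := by rw [hXs]; linarith
  set a : ℝ := X₂ / Xs * (ω ^ 2 - r₁) / ω ^ 3 with ha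
  set b : ℝ := X₁ / Xs * (r₂ - ω ^ 2) / ω ^ 3 with hb
  have hX₂ : 0 < X₂ := lt_trans hX₁ hX₁₂
  have ha0 : 0 < a := by
    apply div_pos (mul_pos (div_pos hX₂ hXs0) (by linarith)) (by positivity)
  have hb0 : 0 < b := by
    apply div_pos (mul_pos (div_pos hX₁ hXs0) (by linarith)) (by positivity)
  set β : ℝ := min (1 / a) (1 / b) with hβ
  have hβ0 : 0 < β := lt_min (by positivity) (by positivity)
  refine ⟨(β : ℂ) * Complex.I, ?_, ?_⟩
  · rw [key1 Xs ω β a X₂ r₁ hXs0.ne' hω.ne' ha]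
    exact abs_estimate _ (mul_pos hβ0 ha0)
      (by calc β * a ≤ (1 / a) * a := by gcongr; exact min_le_left _ _
            _ = 1 := by field_simp)
  · rw [key2 Xs ω β b X₁ r₂ hXs0.ne' hω.ne' hb]
    exact abs_estimate _ (mul_pos hβ0 hb0)
      (by calc β * b ≤ (1 / b) * b := by gcongr; exact min_le_right _ _
            _ = 1 := by field_simp)
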